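/- The function 𝔓_hv satisfies the third-order differential equation on (0,1): for every x ∈ (0,1), the derivative at x of the function y ↦ (y(1−y))^{1/3} · (d/dy)[ (y(1−y))^{2/3} · 𝔓_hv′(y) ] equals 0. -/

import Mathlib

open scoped BigOperators

/-- Rising factorial (Pochhammer symbol) `(x)_k = x(x+1)⋯(x+k-1)`. -/
noncomputable def pochR (x : ℝ) (k : ℕ) : ℝ := ∏ i ∈ Finset.range k, (x + i)

/-- The Gauss hypergeometric series `₂F₁(a,b;c;z)`. -/
noncomputable def F21R (a b c z : ℝ) : ℝ :=
  ∑' k : ℕ, pochR a k * pochR b k / (pochR c k * (Nat.factorial k : ℝ)) * z ^ k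

/-- The generalized hypergeometric series `₃F₂(a₁,a₂,a₃;b₁,b₂;z)`. -/
noncomputable def F32R (a₁ a₂ a₃ b₁ b₂ z : ℝ) : ℝ :=
  ∑' k : ℕ, pochR a₁ k * pochR a₂ k * pochR a₃ k /
      (pochR b₁ k * pochR b₂ k * (Nat.factorial k : ℝ)) * z ^ k

/-- Cardy's horizontal crossing function `𝔓_h`. -/
noncomputable def Ph (z : ℝ) : ℝ :=
  3 * Real.Gamma (2/3) / (Real.Gamma (1/3)) ^ 2 * z ^ ((1:ℝ)/3) *
    F21R (1/3) (2/3) (4/3) z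

/-- Watts's horizontal-vertical crossing function `𝔓_hv`. -/
noncomputable def Phv (z : ℝ) : ℝ :=
  Ph z - Real.sqrt 3 / (2 * Real.pi) * z * F32R 1 1 (4/3) 2 (5/3) z

/-- Cardy's cluster-number function `𝔑_h`. -/
noncomputable def Nh (z : ℝ) : ℝ :=
  1/2 - Real.sqrt 3 / (4 * Real.pi) *
    (Real.log (1 - z) + (1 - z) * F32R 1 1 (4/3) 2 (5/3) (1 - z))

/-! ### Auxiliary infrastructure: power series `sc c z = ∑ c k z^k` -/

noncomputable def sc (c : ℕ → ℝ) (z : ℝ) : ℝ := ∑' k : ℕ, c k * z ^ k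

noncomputable def Dc (c : ℕ → ℝ) : ℕ → ℝ := fun k => ((k : ℝ) + 1) * c (k + 1)

def shf (c : ℕ → ℝ) : ℕ → ℝ := fun k => match k with
  | 0 => 0
  | n + 1 => c n

@[simp] lemma shf_zero (c : ℕ → ℝ) : shf c 0 = 0 := rfl
@[simp] lemma shf_succ (c : ℕ → ℝ) (n : ℕ) : shf c (n + 1) = c n := rfl

lemma summable_shift (p : ℕ) {r : ℝ} (h0 : 0 < r) (h1 : r < 1) :
    Summable fun k : ℕ => ((k : ℝ) + 1) ^ p * r ^ k := by
  have hb : Summable fun n : ℕ => (n : ℝ) ^ p * r ^ n :=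
    summable_pow_mul_geometric_of_norm_lt_one p
      (by rw [Real.norm_eq_abs, abs_of_pos h0]; exact h1)
  have h2 : Summable fun n : ℕ => ((n + 1 : ℕ) : ℝ) ^ p * r ^ (n + 1) :=
    (summable_nat_add_iff 1).mpr hb
  refine (h2.mul_right r⁻¹).congr fun n => ?_
  have hr : r ≠ 0 := ne_of_gt h0
  push_cast
  field_simp
  ring

lemma summable_of_bound {c : ℕ → ℝ} {M : ℝ} (p : ℕ)
    (hM : ∀ k, |c k| ≤ M * ((k : ℝ) + 1) ^ p) {z : ℝ} (hz : |z| < 1) :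
    Summable fun k : ℕ => c k * z ^ k := by
  set r : ℝ := (|z| + 1) / 2 with hr
  have h0 : 0 < r := by positivity
  have h1 : r < 1 := by rw [hr]; linarith
  have hzr : |z| ≤ r := by rw [hr]; linarith
  have hM0 : 0 ≤ M := by
    have := (abs_nonneg (c 0)).trans (hM 0); simpa using this
  have hsum : Summable fun k : ℕ => M * ((k : ℝ) + 1) ^ p * r ^ k :=
    ((summable_shift p h0 h1).mul_left M).congr fun k => (mul_assoc _ _ _).symm
  refine (Summable.of_nonneg_of_le (fun k => abs_nonneg _) (fun k => ?_) hsum).of_abs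
  calc |c k * z ^ k| = |c k| * |z| ^ k := by rw [abs_mul, abs_pow]
    _ ≤ (M * ((k : ℝ) + 1) ^ p) * r ^ k :=
        mul_le_mul (hM k) (pow_le_pow_left₀ (abs_nonneg z) hzr k)
          (by positivity) (by positivity)

lemma hasDerivAt_sc {c : ℕ → ℝ} {M : ℝ} (p : ℕ) (hM : ∀ k, |c k| ≤ M * ((k : ℝ) + 1) ^ p)
    {x : ℝ} (hx : |x| < 1) : HasDerivAt (sc c) (sc (Dc c) x) x := by
  set r : ℝ := (|x| + 1) / 2 with hr
  have h0 : 0 < r := by positivity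
  have h1 : r < 1 := by rw [hr]; linarith
  have hM0 : 0 ≤ M := by
    have := (abs_nonneg (c 0)).trans (hM 0); simpa using this
  set t : Set ℝ := Metric.ball 0 r with ht
  have hxt : x ∈ t := by
    simp only [ht, Metric.mem_ball, Real.dist_eq, sub_zero]
    rw [hr]; linarith
  set u : ℕ → ℝ := fun n => M * ((n : ℝ) + 2) ^ (p + 1) * r ^ n * r⁻¹ with hu_def
  have hu : Summable u := by
    have hs : Summable fun n : ℕ => (M * 2 ^ (p + 1) * r⁻¹) * (((n : ℝ) + 1) ^ (p + 1) * r ^ n) :=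
      (summable_shift (p + 1) h0 h1).mul_left _
    refine Summable.of_nonneg_of_le (fun n => by positivity) (fun n => ?_) hs
    have h2 : ((n : ℝ) + 2) ^ (p + 1) ≤ (2 * ((n : ℝ) + 1)) ^ (p + 1) := by
      apply pow_le_pow_left₀ (by positivity); linarith
    rw [mul_pow] at h2
    calc M * ((n : ℝ) + 2) ^ (p + 1) * r ^ n * r⁻¹
        ≤ M * (2 ^ (p + 1) * ((n : ℝ) + 1) ^ (p + 1)) * r ^ n * r⁻¹ := by
          have : 0 ≤ r⁻¹ := by positivity
          gcongr
      _ = M * 2 ^ (p + 1) * r⁻¹ * (((n : ℝ) + 1) ^ (p + 1) * r ^ n) := by ring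
  have hbound : ∀ n (y : ℝ), y ∈ t → ‖c n * ((n : ℝ) * y ^ (n - 1))‖ ≤ u n := by
    intro n y hy
    have hyr : |y| ≤ r := by
      simp only [ht, Metric.mem_ball, Real.dist_eq, sub_zero] at hy
      exact le_of_lt hy
    match n with
    | 0 => simp [hu_def]; positivity
    | Nat.succ m =>
      have heq : ‖c (m + 1) * (((m + 1 : ℕ) : ℝ) * y ^ (m + 1 - 1))‖
          = |c (m + 1)| * (((m : ℝ) + 1) * |y| ^ m) := by
        rw [Nat.add_sub_cancel, norm_mul, norm_mul, Real.norm_eq_abs, Real.norm_eq_abs,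
          Real.norm_eq_abs, abs_pow]
        push_cast
        rw [abs_of_nonneg (by positivity : (0:ℝ) ≤ (m : ℝ) + 1)]
      rw [heq]
      have h1' : |c (m + 1)| ≤ M * ((m : ℝ) + 2) ^ p := by
        have h := hM (m + 1); push_cast at h
        have e : ((m : ℝ) + 1 + 1) = (m : ℝ) + 2 := by ring
        rwa [e] at h
      calc |c (m + 1)| * (((m : ℝ) + 1) * |y| ^ m)
          ≤ (M * ((m : ℝ) + 2) ^ p) * (((m : ℝ) + 2) * r ^ m) := by
            apply mul_le_mul h1' _ (by positivity) (by positivity)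
            apply mul_le_mul (by linarith) (pow_le_pow_left₀ (abs_nonneg y) hyr m)
              (by positivity) (by positivity)
        _ = (((m:ℝ)+2) ^ (p+1)) * (M * r ^ m) := by rw [pow_succ]; ring
        _ ≤ (((m:ℝ)+3) ^ (p+1)) * (M * r ^ m) := by
            have h4 : ((m:ℝ)+2)^(p+1) ≤ ((m:ℝ)+3)^(p+1) :=
              pow_le_pow_left₀ (by positivity) (by linarith) _
            have : 0 ≤ M * r ^ m := by positivity
            gcongr
        _ = u (m + 1) := by
            simp only [hu_def]
            have hrne : r ≠ 0 := ne_of_gt h0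
            push_cast
            rw [pow_succ]
            field_simp
            ring
  have hderiv : HasDerivAt (fun z : ℝ => ∑' n : ℕ, c n * z ^ n)
      (∑' n : ℕ, c n * ((n : ℝ) * x ^ (n - 1))) x := by
    refine hasDerivAt_tsum_of_isPreconnected hu Metric.isOpen_ball
      ((convex_ball (0:ℝ) r).isPreconnected) (fun n y _ => ?_) hbound hxt ?_ hxt
    · exact (hasDerivAt_pow n y).const_mul (c n)
    · exact summable_of_bound p hM hx
  have hs2 : Summable fun n : ℕ => c n * ((n : ℝ) * x ^ (n - 1)) :=
    Summable.of_norm (Summable.of_nonneg_of_le (fun n => norm_nonneg _)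
      (fun n => hbound n x hxt) hu)
  have hsum_eq : (∑' n : ℕ, c n * ((n : ℝ) * x ^ (n - 1))) = sc (Dc c) x := by
    rw [Summable.tsum_eq_zero_add hs2]
    simp only [Nat.cast_zero, zero_mul, mul_zero, zero_add]
    unfold sc Dc
    refine tsum_congr fun n => ?_
    rw [Nat.add_sub_cancel]
    push_cast
    ring
  rw [← hsum_eq]
  exact hderiv

section scalg
variable {c c' : ℕ → ℝ} {z a : ℝ}

lemma summable_shf (hc : Summable fun k => c k * z ^ k) :
    Summable fun k => shf c k * z ^ k := by
  apply (summable_nat_add_iff 1).mp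
  refine ((hc.mul_left z).congr fun n => ?_)
  simp [shf, pow_succ]; ring

lemma mul_sc (hc : Summable fun k => c k * z ^ k) : z * sc c z = sc (shf c) z := by
  unfold sc
  rw [Summable.tsum_eq_zero_add (summable_shf hc)]
  simp only [shf_zero, shf_succ, zero_mul, zero_add]
  rw [← tsum_mul_left]
  exact tsum_congr fun n => by rw [pow_succ]; ring

lemma const_mul_sc (a : ℝ) (c : ℕ → ℝ) (z : ℝ) :
    a * sc c z = sc (fun k => a * c k) z := by
  unfold sc; rw [← tsum_mul_left]; exact tsum_congr fun k => (mul_assoc _ _ _).symm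

lemma sc_congr (h : ∀ k, c k = c' k) : sc c z = sc c' z :=
  tsum_congr fun k => by rw [h k]

lemma sc_sub (h1 : Summable fun k => c k * z ^ k) (h2 : Summable fun k => c' k * z ^ k) :
    sc c z - sc c' z = sc (fun k => c k - c' k) z := by
  unfold sc
  rw [← Summable.tsum_sub h1 h2]
  exact tsum_congr fun k => by ring

lemma sc_add (h1 : Summable fun k => c k * z ^ k) (h2 : Summable fun k => c' k * z ^ k) :
    sc c z + sc c' z = sc (fun k => c k + c' k) z := by
  unfold sc
  rw [← Summable.tsum_add h1 h2]
  exact tsum_congr fun k => by ring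

lemma summable_sub (h1 : Summable fun k => c k * z ^ k) (h2 : Summable fun k => c' k * z ^ k) :
    Summable fun k => (c k - c' k) * z ^ k :=
  (h1.sub h2).congr fun k => by ring

lemma summable_add (h1 : Summable fun k => c k * z ^ k) (h2 : Summable fun k => c' k * z ^ k) :
    Summable fun k => (c k + c' k) * z ^ k :=
  (h1.add h2).congr fun k => by ring

lemma summable_cm (a : ℝ) (h1 : Summable fun k => c k * z ^ k) :
    Summable fun k => (a * c k) * z ^ k :=
  (h1.mul_left a).congr fun k => by ring

lemma sc_zero_eval (c : ℕ → ℝ) : sc c 0 = c 0 := by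
  unfold sc
  rw [tsum_eq_single 0]
  · simp
  · intro k hk
    simp [zero_pow hk]
end scalg

section poch
lemma pochR_zero (x : ℝ) : pochR x 0 = 1 := by simp [pochR]
lemma pochR_one' (x : ℝ) : pochR x 1 = x := by simp [pochR]
lemma pochR_succ (x : ℝ) (k : ℕ) : pochR x (k + 1) = pochR x k * (x + k) := by
  simp [pochR, Finset.prod_range_succ]
lemma pochR_succ' (x : ℝ) (k : ℕ) : pochR x (k + 1) = x * pochR (x + 1) k := by
  unfold pochR
  rw [Finset.prod_range_succ']
  simp only [Nat.cast_zero, add_zero]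
  rw [mul_comm]
  congr 1
  exact Finset.prod_congr rfl fun i _ => by push_cast; ring
lemma pochR_pos {x : ℝ} (hx : 0 < x) (k : ℕ) : 0 < pochR x k := by
  apply Finset.prod_pos
  intro i _
  positivity
lemma pochR_le_pochR {x y : ℝ} (hx : 0 < x) (hxy : x ≤ y) (k : ℕ) :
    pochR x k ≤ pochR y k := by
  apply Finset.prod_le_prod
  · intro i _; positivity
  · intro i _; linarith
lemma pochR_nat_one (k : ℕ) : pochR 1 k = (Nat.factorial k : ℝ) := by
  induction k with
  | zero => simp [pochR_zero]
  | succ n ih => rw [pochR_succ, ih, Nat.factorial_succ]; push_cast; ring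
lemma pochR_nat_two (k : ℕ) : pochR 2 k = (Nat.factorial (k + 1) : ℝ) := by
  induction k with
  | zero => simp [pochR_zero]
  | succ n ih => rw [pochR_succ, ih, Nat.factorial_succ (n+1)]; push_cast; ring
end poch

/-! ### The concrete coefficient sequences -/

noncomputable def aaF : ℕ → ℝ := fun k => pochR (4/3) k / pochR (5/3) k
noncomputable def bbF : ℕ → ℝ := fun k => pochR (2/3) k / (Nat.factorial k : ℝ)
noncomputable def ccF : ℕ → ℝ :=
  fun k => pochR (1/3) k * pochR (2/3) k / (pochR (4/3) k * (Nat.factorial k : ℝ))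
noncomputable def ddF : ℕ → ℝ :=
  fun k => pochR 1 k * pochR 1 k * pochR (4/3) k /
    (pochR 2 k * pochR (5/3) k * (Nat.factorial k : ℝ))

lemma F21_eq_sc : ∀ z, F21R (1/3) (2/3) (4/3) z = sc ccF z := fun _ => rfl
lemma F32_eq_sc : ∀ z, F32R 1 1 (4/3) 2 (5/3) z = sc ddF z := fun _ => rfl

lemma fact_pos' (k : ℕ) : (0:ℝ) < (Nat.factorial k : ℝ) := by
  exact_mod_cast Nat.factorial_pos k

lemma aaF_nonneg (k : ℕ) : 0 ≤ aaF k :=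
  le_of_lt (div_pos (pochR_pos (by norm_num) k) (pochR_pos (by norm_num) k))

lemma aaF_le_one (k : ℕ) : aaF k ≤ 1 := by
  unfold aaF
  rw [div_le_one (pochR_pos (by norm_num) k)]
  exact pochR_le_pochR (by norm_num) (by norm_num) k

lemma bbF_nonneg (k : ℕ) : 0 ≤ bbF k :=
  le_of_lt (div_pos (pochR_pos (by norm_num) k) (fact_pos' k))

lemma bbF_le_one (k : ℕ) : bbF k ≤ 1 := by
  unfold bbF
  rw [div_le_one (fact_pos' k)]
  calc pochR (2/3) k ≤ pochR 1 k := pochR_le_pochR (by norm_num) (by norm_num) k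
    _ = (Nat.factorial k : ℝ) := pochR_nat_one k

lemma ccF_nonneg (k : ℕ) : 0 ≤ ccF k := by
  unfold ccF
  have := pochR_pos (show (0:ℝ) < 1/3 by norm_num) k
  have := pochR_pos (show (0:ℝ) < 2/3 by norm_num) k
  have := pochR_pos (show (0:ℝ) < 4/3 by norm_num) k
  have := fact_pos' k
  positivity

lemma ccF_le_one (k : ℕ) : ccF k ≤ 1 := by
  unfold ccF
  have h4 := pochR_pos (show (0:ℝ) < 4/3 by norm_num) k
  have hf := fact_pos' k
  rw [div_le_one (by positivity)]
  have h13 : pochR (1/3) k ≤ pochR (4/3) k :=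
    pochR_le_pochR (by norm_num) (by norm_num) k
  have h23 : pochR (2/3) k ≤ (Nat.factorial k : ℝ) := by
    rw [← pochR_nat_one]; exact pochR_le_pochR (by norm_num) (by norm_num) k
  have h13n : 0 ≤ pochR (1/3) k := le_of_lt (pochR_pos (by norm_num) k)
  have h23n : 0 ≤ pochR (2/3) k := le_of_lt (pochR_pos (by norm_num) k)
  exact mul_le_mul h13 h23 h23n (le_of_lt h4)

lemma bnd_of_le_one {c : ℕ → ℝ} (h0 : ∀ k, 0 ≤ c k) (h1 : ∀ k, c k ≤ 1) :
    ∀ k, |c k| ≤ 1 * ((k : ℝ) + 1) ^ 0 := fun k => by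
  rw [abs_of_nonneg (h0 k)]; simpa using h1 k

lemma bnd_Dc {c : ℕ → ℝ} {M : ℝ} {p : ℕ} (h : ∀ k, |c k| ≤ M * ((k:ℝ)+1)^p) :
    ∀ k, |Dc c k| ≤ (2^p*M) * ((k:ℝ)+1)^(p+1) := by
  intro k
  have hM0 : 0 ≤ M := by
    have := (abs_nonneg (c 0)).trans (h 0); simpa using this
  have h1 : |Dc c k| = ((k:ℝ)+1) * |c (k+1)| := by
    unfold Dc
    rw [abs_mul, abs_of_nonneg (by positivity : (0:ℝ) ≤ (k:ℝ)+1)]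
  have h2 := h (k+1)
  push_cast at h2
  have h3 : ((k:ℝ)+1+1)^p ≤ (2*((k:ℝ)+1))^p :=
    pow_le_pow_left₀ (by positivity) (by linarith) p
  calc |Dc c k| = ((k:ℝ)+1) * |c (k+1)| := h1
    _ ≤ ((k:ℝ)+1) * (M*((k:ℝ)+1+1)^p) := by
        apply mul_le_mul_of_nonneg_left h2 (by positivity)
    _ ≤ ((k:ℝ)+1) * (M*(2*((k:ℝ)+1))^p) := by
        apply mul_le_mul_of_nonneg_left (mul_le_mul_of_nonneg_left h3 hM0) (by positivity)
    _ = (2^p*M) * ((k:ℝ)+1)^(p+1) := by rw [mul_pow, pow_succ]; ring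

lemma bnd_shf {c : ℕ → ℝ} {M : ℝ} {p : ℕ} (h : ∀ k, |c k| ≤ M * ((k:ℝ)+1)^p) :
    ∀ k, |shf c k| ≤ M * ((k:ℝ)+1)^p := by
  have hM0 : 0 ≤ M := by
    have := (abs_nonneg (c 0)).trans (h 0); simpa using this
  intro k
  match k with
  | 0 => simp; positivity
  | n + 1 =>
    rw [shf_succ]
    refine (h n).trans ?_
    push_cast
    apply mul_le_mul_of_nonneg_left (pow_le_pow_left₀ (by positivity) (by linarith) p) hM0

/-! ### Coefficient identities -/

lemma hdd_eq (k : ℕ) : ddF k = aaF k / ((k:ℝ)+1) := by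
  unfold ddF aaF
  rw [pochR_nat_one, pochR_nat_two, Nat.factorial_succ]
  have hf : (Nat.factorial k : ℝ) ≠ 0 := ne_of_gt (fact_pos' k)
  have h53 : pochR (5/3) k ≠ 0 := ne_of_gt (pochR_pos (by norm_num) k)
  have hk1 : ((k:ℝ)+1) ≠ 0 := by positivity
  push_cast
  field_simp

lemma ddF_nonneg (k : ℕ) : 0 ≤ ddF k := by
  rw [hdd_eq]
  have := aaF_nonneg k
  positivity

lemma ddF_le_one (k : ℕ) : ddF k ≤ 1 := by
  rw [hdd_eq]
  have h1 : aaF k ≤ 1 := aaF_le_one k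
  have h2 : (1:ℝ) ≤ (k:ℝ)+1 := by
    have : (0:ℝ) ≤ (k:ℝ) := Nat.cast_nonneg k
    linarith
  calc aaF k / ((k:ℝ)+1) ≤ 1 / 1 :=
        div_le_div₀ (by norm_num) h1 (by norm_num) h2
    _ = 1 := by norm_num

lemma haa_rec (k : ℕ) : aaF (k+1) * (5/3 + (k:ℝ)) = aaF k * (4/3 + (k:ℝ)) := by
  unfold aaF
  rw [pochR_succ, pochR_succ]
  have h53 : pochR (5/3) k ≠ 0 := ne_of_gt (pochR_pos (by norm_num) k)
  have h53k : (5/3 + (k:ℝ)) ≠ 0 := by positivity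
  field_simp

lemma hbb_rec (k : ℕ) : ((k:ℝ)+1) * bbF (k+1) = (2/3 + (k:ℝ)) * bbF k := by
  unfold bbF
  rw [pochR_succ, Nat.factorial_succ]
  have hf : (Nat.factorial k : ℝ) ≠ 0 := ne_of_gt (fact_pos' k)
  have hk1 : ((k:ℝ)+1) ≠ 0 := by positivity
  push_cast
  field_simp

lemma hcc13 (k : ℕ) : (1/3 + (k:ℝ)) * ccF k = 1/3 * bbF k := by
  have hcomb : pochR (1/3) k * (1/3 + (k:ℝ)) = 1/3 * pochR (4/3) k := by
    have h := pochR_succ (1/3) k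
    have h' := pochR_succ' (1/3) k
    rw [show (1:ℝ)/3 + 1 = 4/3 by norm_num] at h'
    rw [← h, h']
  have h43 : pochR (4/3) k ≠ 0 := ne_of_gt (pochR_pos (by norm_num) k)
  have hf : (Nat.factorial k : ℝ) ≠ 0 := ne_of_gt (fact_pos' k)
  unfold ccF bbF
  calc (1/3 + (k:ℝ)) * (pochR (1/3) k * pochR (2/3) k / (pochR (4/3) k * (Nat.factorial k : ℝ)))
      = (pochR (1/3) k * (1/3 + (k:ℝ))) * pochR (2/3) k
          / (pochR (4/3) k * (Nat.factorial k : ℝ)) := by ring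
    _ = (1/3 * pochR (4/3) k) * pochR (2/3) k
          / (pochR (4/3) k * (Nat.factorial k : ℝ)) := by rw [hcomb]
    _ = 1/3 * (pochR (2/3) k / (Nat.factorial k : ℝ)) := by
        field_simp

lemma shf_Dc (c : ℕ → ℝ) (k : ℕ) : shf (Dc c) k = (k:ℝ) * c k := by
  match k with
  | 0 => simp
  | n + 1 => rw [shf_succ]; unfold Dc; push_cast; ring

lemma Dc_shf_dd (k : ℕ) : Dc (shf ddF) k = aaF k := by
  unfold Dc
  rw [shf_succ, hdd_eq]
  have hk1 : ((k:ℝ)+1) ≠ 0 := by positivity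
  field_simp

/-! ### The hypergeometric ODE identity for `g = ∑ aaF k z^k` -/

lemma ode_identity {x : ℝ} (hx : |x| < 1) :
    x*(1-x) * sc (Dc (Dc aaF)) x + 5/3*(1-2*x) * sc (Dc aaF) x - 4/3 * sc aaF x = 0 := by
  have b0 := bnd_of_le_one aaF_nonneg aaF_le_one
  have b1 := bnd_Dc b0
  have b2 := bnd_Dc b1
  have S0 : Summable fun k => aaF k * x ^ k := summable_of_bound 0 b0 hx
  have S1 : Summable fun k => Dc aaF k * x ^ k := summable_of_bound 1 b1 hx
  have S2 : Summable fun k => Dc (Dc aaF) k * x ^ k := summable_of_bound 2 b2 hx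
  have e1 : x * sc (Dc (Dc aaF)) x = sc (shf (Dc (Dc aaF))) x := mul_sc S2
  have e2 : x * sc (shf (Dc (Dc aaF))) x = sc (shf (shf (Dc (Dc aaF)))) x :=
    mul_sc (summable_shf S2)
  have e3 : x * sc (Dc aaF) x = sc (shf (Dc aaF)) x := mul_sc S1
  have t1 : x*(1-x) * sc (Dc (Dc aaF)) x
      = sc (shf (Dc (Dc aaF))) x - sc (shf (shf (Dc (Dc aaF)))) x := by
    have h : x*(1-x) * sc (Dc (Dc aaF)) x
        = x * sc (Dc (Dc aaF)) x - x * (x * sc (Dc (Dc aaF)) x) := by ring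
    rw [h, e1, e2]
  have t2 : 5/3*(1-2*x) * sc (Dc aaF) x
      = 5/3 * sc (Dc aaF) x - 10/3 * sc (shf (Dc aaF)) x := by
    have h : 5/3*(1-2*x) * sc (Dc aaF) x
        = 5/3 * sc (Dc aaF) x - 10/3 * (x * sc (Dc aaF) x) := by ring
    rw [h, e3]
  rw [t1, t2, const_mul_sc (5/3 : ℝ), const_mul_sc (10/3 : ℝ), const_mul_sc (4/3 : ℝ)]
  have hA : Summable fun k => shf (Dc (Dc aaF)) k * x ^ k := summable_shf S2
  have hB : Summable fun k => shf (shf (Dc (Dc aaF))) k * x ^ k := summable_shf hA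
  have hC : Summable fun k => (5/3 * Dc aaF k) * x ^ k := summable_cm _ S1
  have hD : Summable fun k => (10/3 * shf (Dc aaF) k) * x ^ k :=
    summable_cm _ (summable_shf S1)
  have hE : Summable fun k => (4/3 * aaF k) * x ^ k := summable_cm _ S0
  rw [sc_sub hA hB, sc_sub hC hD, sc_add (summable_sub hA hB) (summable_sub hC hD),
    sc_sub (summable_add (summable_sub hA hB) (summable_sub hC hD)) hE]
  have hzero : ∀ k, (shf (Dc (Dc aaF)) k - shf (shf (Dc (Dc aaF))) k
      + (5/3 * Dc aaF k - 10/3 * shf (Dc aaF) k) - 4/3 * aaF k) = 0 := by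
    intro k
    match k with
    | 0 =>
      simp only [shf_zero]
      unfold Dc
      have ha1 : aaF 1 = 4/5 := by
        unfold aaF; rw [pochR_one', pochR_one']; norm_num
      have ha0 : aaF 0 = 1 := by
        unfold aaF; rw [pochR_zero, pochR_zero]; norm_num
      rw [ha1]  -- aaF (0+1)
      norm_num [ha0, ha1]
    | n + 1 =>
      rw [shf_succ, shf_succ, shf_Dc, shf_Dc]
      have hrec := haa_rec (n+1)
      unfold Dc
      push_cast at hrec ⊢
      linear_combination ((n:ℝ)+2) * hrec
  rw [sc_congr hzero]
  unfold sc
  simp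

/-! ### Binomial series: `∑ bbF k z^k = (1-z)^(-2/3)` on (0,1) -/

lemma bb_deriv_identity {z : ℝ} (hz : |z| < 1) :
    (1-z) * sc (Dc bbF) z = 2/3 * sc bbF z := by
  have b0 := bnd_of_le_one bbF_nonneg bbF_le_one
  have b1 := bnd_Dc b0
  have S0 : Summable fun k => bbF k * z ^ k := summable_of_bound 0 b0 hz
  have S1 : Summable fun k => Dc bbF k * z ^ k := summable_of_bound 1 b1 hz
  have e : (1-z) * sc (Dc bbF) z = sc (Dc bbF) z - z * sc (Dc bbF) z := by ring
  rw [e, mul_sc S1, sc_sub S1 (summable_shf S1), const_mul_sc (2/3 : ℝ)]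
  apply sc_congr
  intro k
  rw [shf_Dc]
  have hr := hbb_rec k
  unfold Dc
  linear_combination hr

lemma rpow_split {w : ℝ} (hw : 0 < w) (a b : ℝ) (h : a + 1 = b) : w ^ b = w ^ a * w := by
  rw [← h, Real.rpow_add hw, Real.rpow_one]

lemma hasDerivAt_bb {z : ℝ} (hz : |z| < 1) :
    HasDerivAt (sc bbF) (sc (Dc bbF) z) z :=
  hasDerivAt_sc 0 (bnd_of_le_one bbF_nonneg bbF_le_one) hz

lemma hasDerivAt_phi {z : ℝ} (hz : |z| < 1) :
    HasDerivAt (fun s => (1-s) ^ ((2:ℝ)/3) * sc bbF s) 0 z := by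
  have h1z : 0 < 1 - z := by
    have := (abs_lt.mp hz).2; linarith
  have hb := hasDerivAt_bb hz
  have hlin : HasDerivAt (fun s : ℝ => 1 - s) (-1) z := by
    simpa using (hasDerivAt_id z).const_sub 1
  have hg : HasDerivAt (fun s : ℝ => (1-s) ^ ((2:ℝ)/3))
      ((-1) * ((2:ℝ)/3) * (1-z) ^ ((2:ℝ)/3 - 1)) z :=
    hlin.rpow_const (Or.inl (ne_of_gt h1z))
  have hmul := hg.mul hb
  refine hmul.congr_deriv ?_
  symm
  have e23 : (1-z) ^ ((2:ℝ)/3) = (1-z) ^ ((2:ℝ)/3 - 1) * (1-z) :=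
    rpow_split h1z _ _ (by ring)
  rw [e23]
  have key := bb_deriv_identity hz
  linear_combination (-(1-z) ^ ((2:ℝ)/3 - 1)) * key

lemma sc_bb_eq {t : ℝ} (ht0 : 0 < t) (ht1 : t < 1) :
    sc bbF t = (1-t) ^ (-(2:ℝ)/3) := by
  set φ : ℝ → ℝ := fun s => (1-s) ^ ((2:ℝ)/3) * sc bbF s with hφ
  have habs : ∀ y ∈ Set.Icc (0:ℝ) t, |y| < 1 := by
    intro y hy
    rw [abs_lt]
    constructor <;> [linarith [hy.1]; linarith [hy.2]]
  have hcont : ContinuousOn φ (Set.Icc 0 t) := fun y hy =>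
    ((hasDerivAt_phi (habs y hy)).continuousAt).continuousWithinAt
  have hder : ∀ y ∈ Set.Ico (0:ℝ) t, HasDerivWithinAt φ 0 (Set.Ici y) y := fun y hy =>
    (hasDerivAt_phi (habs y ⟨hy.1, le_of_lt hy.2⟩)).hasDerivWithinAt
  have hconst := constant_of_has_deriv_right_zero hcont hder t
    (Set.mem_Icc.mpr ⟨le_of_lt ht0, le_refl t⟩)
  have hφ0 : φ 0 = 1 := by
    rw [hφ]
    simp only [sub_zero, Real.one_rpow, sc_zero_eval]
    unfold bbF
    rw [pochR_zero]
    simp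
  rw [hφ0] at hconst
  have h1t : 0 < 1 - t := by linarith
  have hne : (1-t) ^ ((2:ℝ)/3) ≠ 0 := ne_of_gt (Real.rpow_pos_of_pos h1t _)
  have : sc bbF t = ((1-t) ^ ((2:ℝ)/3))⁻¹ := by
    rw [hφ] at hconst
    simp only at hconst
    field_simp
    linarith [hconst]
  rw [this, show -(2:ℝ)/3 = -((2:ℝ)/3) by norm_num, Real.rpow_neg (le_of_lt h1t)]

lemma hasDerivAt_w (y : ℝ) : HasDerivAt (fun t : ℝ => t * (1 - t)) (1 - 2*y) y := by
  have h := (hasDerivAt_id y).mul ((hasDerivAt_id y).const_sub 1)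
  refine h.congr_deriv ?_
  simp only [id]
  ring

/-! ### Derivative of Phv on (0,1) -/

lemma F_sum_identity {z : ℝ} (hz : |z| < 1) :
    1/3 * sc ccF z + z * sc (Dc ccF) z = 1/3 * sc bbF z := by
  have b0 := bnd_of_le_one ccF_nonneg ccF_le_one
  have b1 := bnd_Dc b0
  have S1 : Summable fun k => Dc ccF k * z ^ k := summable_of_bound 1 b1 hz
  rw [mul_sc S1, const_mul_sc (1/3 : ℝ), const_mul_sc (1/3 : ℝ)]
  have S0 : Summable fun k => (1/3 * ccF k) * z ^ k :=
    summable_cm _ (summable_of_bound 0 b0 hz)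
  rw [sc_add S0 (summable_shf S1)]
  apply sc_congr
  intro k
  rw [shf_Dc]
  linear_combination hcc13 k

lemma hasDerivAt_Phv {t : ℝ} (ht0 : 0 < t) (ht1 : t < 1) :
    HasDerivAt Phv
      (Real.Gamma (2/3) / (Real.Gamma (1/3)) ^ 2 * (t*(1-t)) ^ (-(2:ℝ)/3)
        - Real.sqrt 3 / (2 * Real.pi) * sc aaF t) t := by
  have habs : |t| < 1 := abs_lt.mpr ⟨by linarith, ht1⟩
  have h1t : 0 < 1 - t := by linarith
  -- the 3F2 part
  have hdd_b : ∀ k, |ddF k| ≤ 1 * ((k:ℝ)+1)^0 := bnd_of_le_one ddF_nonneg ddF_le_one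
  have hshf_b := bnd_shf hdd_b
  have h32' : HasDerivAt (sc (shf ddF)) (sc (Dc (shf ddF)) t) t :=
    hasDerivAt_sc 0 hshf_b habs
  have hev32 : (fun z : ℝ => z * F32R 1 1 (4/3) 2 (5/3) z) =ᶠ[nhds t] sc (shf ddF) := by
    filter_upwards [(isOpen_Ioo (a := (-1:ℝ)) (b := 1)).mem_nhds ⟨by linarith, ht1⟩] with z hz
    rw [F32_eq_sc]
    exact mul_sc (summable_of_bound 0 hdd_b (abs_lt.mpr ⟨hz.1, hz.2⟩))
  have h32 : HasDerivAt (fun z : ℝ => z * F32R 1 1 (4/3) 2 (5/3) z) (sc aaF t) t := by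
    have := h32'.congr_of_eventuallyEq hev32
    rwa [sc_congr Dc_shf_dd] at this
  -- the Ph part
  have hcc_b := bnd_of_le_one ccF_nonneg ccF_le_one
  have hF : HasDerivAt (sc ccF) (sc (Dc ccF) t) t := hasDerivAt_sc 0 hcc_b habs
  have hr : HasDerivAt (fun z : ℝ => z ^ ((1:ℝ)/3)) (((1:ℝ)/3) * t ^ ((1:ℝ)/3 - 1)) t :=
    Real.hasDerivAt_rpow_const (Or.inl (ne_of_gt ht0))
  set C : ℝ := 3 * Real.Gamma (2/3) / (Real.Gamma (1/3)) ^ 2 with hC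
  have hPh0 : HasDerivAt (fun z : ℝ => C * z ^ ((1:ℝ)/3) * sc ccF z)
      ((C * (((1:ℝ)/3) * t ^ ((1:ℝ)/3 - 1))) * sc ccF t
        + (C * t ^ ((1:ℝ)/3)) * sc (Dc ccF) t) t := by
    have := (hr.const_mul C).mul hF
    exact this
  have hPh_fun : Ph = fun z : ℝ => C * z ^ ((1:ℝ)/3) * sc ccF z := by
    funext z
    rw [Ph, F21_eq_sc, hC]
  have hPhval : (C * (((1:ℝ)/3) * t ^ ((1:ℝ)/3 - 1))) * sc ccF t
        + (C * t ^ ((1:ℝ)/3)) * sc (Dc ccF) t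
      = Real.Gamma (2/3) / (Real.Gamma (1/3)) ^ 2 * (t*(1-t)) ^ (-(2:ℝ)/3) := by
    have e1 : t ^ ((1:ℝ)/3 - 1) = t ^ (-(2:ℝ)/3) := by norm_num
    have e2 : t ^ ((1:ℝ)/3) = t ^ (-(2:ℝ)/3) * t :=
      rpow_split ht0 _ _ (by norm_num)
    rw [e1, e2]
    have hsum := F_sum_identity habs
    have hbb := sc_bb_eq ht0 ht1
    have e3 : (t*(1-t)) ^ (-(2:ℝ)/3) = t ^ (-(2:ℝ)/3) * (1-t) ^ (-(2:ℝ)/3) :=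
      Real.mul_rpow (le_of_lt ht0) (le_of_lt h1t)
    rw [e3, hC]
    rw [← hbb]
    linear_combination (3 * Real.Gamma (2/3) / (Real.Gamma (1/3)) ^ 2 * t ^ (-(2:ℝ)/3)) * hsum
  have hPh : HasDerivAt Ph
      (Real.Gamma (2/3) / (Real.Gamma (1/3)) ^ 2 * (t*(1-t)) ^ (-(2:ℝ)/3)) t := by
    rw [hPh_fun, ← hPhval]
    exact hPh0
  -- combine
  have hPhv_fun : Phv = fun z : ℝ =>
      Ph z - Real.sqrt 3 / (2 * Real.pi) * (z * F32R 1 1 (4/3) 2 (5/3) z) := by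
    funext z
    rw [Phv]
    ring
  rw [hPhv_fun]
  exact hPh.sub (h32.const_mul (Real.sqrt 3 / (2 * Real.pi)))

lemma hasDerivAt_g {z : ℝ} (hz : |z| < 1) : HasDerivAt (sc aaF) (sc (Dc aaF) z) z :=
  hasDerivAt_sc 0 (bnd_of_le_one aaF_nonneg aaF_le_one) hz

lemma hasDerivAt_g1 {z : ℝ} (hz : |z| < 1) :
    HasDerivAt (sc (Dc aaF)) (sc (Dc (Dc aaF)) z) z :=
  hasDerivAt_sc 1 (bnd_Dc (bnd_of_le_one aaF_nonneg aaF_le_one)) hz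

/-- `𝔓_hv` satisfies the third-order differential equation on `(0,1)`. -/
theorem stmt7 (x : ℝ) (hx : x ∈ Set.Ioo (0:ℝ) 1) :
    deriv
      (fun y => (y * (1 - y)) ^ ((1:ℝ)/3) *
        deriv (fun t => (t * (1 - t)) ^ ((2:ℝ)/3) * deriv Phv t) y) x = 0 := by
  obtain ⟨hx0, hx1⟩ := hx
  set B : ℝ := Real.sqrt 3 / (2 * Real.pi) with hB
  set A : ℝ := Real.Gamma (2/3) / (Real.Gamma (1/3)) ^ 2 with hA
  have hinner : ∀ y ∈ Set.Ioo (0:ℝ) 1,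
      HasDerivAt (fun t => (t * (1 - t)) ^ ((2:ℝ)/3) * deriv Phv t)
        (-B * ((2:ℝ)/3*(1-2*y)*((y*(1-y)) ^ (-(1:ℝ)/3))*sc aaF y
          + ((y*(1-y)) ^ ((2:ℝ)/3))*sc (Dc aaF) y)) y := by
    intro y hy
    have hy0 := hy.1
    have hy1 := hy.2
    have hw : 0 < y*(1-y) := mul_pos hy0 (by linarith)
    have habs : |y| < 1 := abs_lt.mpr ⟨by linarith, hy1⟩
    have hev : (fun t => (t * (1 - t)) ^ ((2:ℝ)/3) * deriv Phv t)
        =ᶠ[nhds y] (fun t => A - B * ((t*(1-t)) ^ ((2:ℝ)/3) * sc aaF t)) := by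
      filter_upwards [isOpen_Ioo.mem_nhds hy] with z hz
      have hwz : 0 < z*(1-z) := mul_pos hz.1 (by linarith [hz.2])
      rw [(hasDerivAt_Phv hz.1 hz.2).deriv]
      have e : (z*(1-z)) ^ ((2:ℝ)/3) * ((z*(1-z)) ^ (-(2:ℝ)/3)) = 1 := by
        rw [← Real.rpow_add hwz]
        norm_num
      rw [← hA, ← hB]
      linear_combination A * e
    have hwd := hasDerivAt_w y
    have hwp : HasDerivAt (fun t : ℝ => (t*(1-t)) ^ ((2:ℝ)/3))
        ((1-2*y)*((2:ℝ)/3)*((y*(1-y)) ^ ((2:ℝ)/3 - 1))) y :=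
      hwd.rpow_const (Or.inl (ne_of_gt hw))
    have hG := hasDerivAt_g habs
    have hfull : HasDerivAt (fun t : ℝ => A - B * ((t*(1-t)) ^ ((2:ℝ)/3) * sc aaF t))
        (-B * ((2:ℝ)/3*(1-2*y)*((y*(1-y)) ^ (-(1:ℝ)/3))*sc aaF y
          + ((y*(1-y)) ^ ((2:ℝ)/3))*sc (Dc aaF) y)) y := by
      have h := ((hwp.mul hG).const_mul B).const_sub A
      refine h.congr_deriv ?_
      have he : (y*(1-y)) ^ ((2:ℝ)/3 - 1) = (y*(1-y)) ^ (-(1:ℝ)/3) := by norm_num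
      rw [he]
      ring
    exact hfull.congr_of_eventuallyEq hev
  have hev2 : (fun y => (y * (1 - y)) ^ ((1:ℝ)/3) *
        deriv (fun t => (t * (1 - t)) ^ ((2:ℝ)/3) * deriv Phv t) y)
      =ᶠ[nhds x] (fun y => -B * ((2:ℝ)/3*(1-2*y)*sc aaF y + y*(1-y)*sc (Dc aaF) y)) := by
    filter_upwards [isOpen_Ioo.mem_nhds (⟨hx0, hx1⟩ : x ∈ Set.Ioo (0:ℝ) 1)] with y hy
    rw [(hinner y hy).deriv]
    have hw : 0 < y*(1-y) := mul_pos hy.1 (by linarith [hy.2])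
    have e1 : (y*(1-y)) ^ ((1:ℝ)/3) * ((y*(1-y)) ^ (-(1:ℝ)/3)) = 1 := by
      rw [← Real.rpow_add hw]
      norm_num
    have e2 : (y*(1-y)) ^ ((1:ℝ)/3) * ((y*(1-y)) ^ ((2:ℝ)/3)) = y*(1-y) := by
      rw [← Real.rpow_add hw]
      norm_num
    linear_combination (-B) * ((2:ℝ)/3*(1-2*y)*sc aaF y) * e1
      + (-B) * (sc (Dc aaF) y) * e2
  rw [hev2.deriv_eq]
  have habs : |x| < 1 := abs_lt.mpr ⟨by linarith, hx1⟩
  have hG := hasDerivAt_g habs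
  have hG1 := hasDerivAt_g1 habs
  have hlin : HasDerivAt (fun y : ℝ => 1-2*y) (-2 : ℝ) x := by
    simpa using ((hasDerivAt_id x).const_mul (2:ℝ)).const_sub 1
  have hd1 : HasDerivAt (fun y : ℝ => (2:ℝ)/3*(1-2*y)*sc aaF y)
      (((2:ℝ)/3*(-2))*sc aaF x + ((2:ℝ)/3*(1-2*x))*sc (Dc aaF) x) x := by
    have h := (hlin.const_mul ((2:ℝ)/3)).mul hG
    exact h
  have hd2 : HasDerivAt (fun y : ℝ => y*(1-y)*sc (Dc aaF) y)
      ((1-2*x)*sc (Dc aaF) x + x*(1-x)*sc (Dc (Dc aaF)) x) x := by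
    have h := (hasDerivAt_w x).mul hG1
    exact h
  have hfull : HasDerivAt
      (fun y : ℝ => -B * ((2:ℝ)/3*(1-2*y)*sc aaF y + y*(1-y)*sc (Dc aaF) y))
      (-B * ((((2:ℝ)/3*(-2))*sc aaF x + ((2:ℝ)/3*(1-2*x))*sc (Dc aaF) x)
        + ((1-2*x)*sc (Dc aaF) x + x*(1-x)*sc (Dc (Dc aaF)) x))) x :=
    (hd1.add hd2).const_mul (-B)
  rw [hfull.deriv]
  have hode := ode_identity habs
  linear_combination (-B) * hode
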